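/- Let M ∈ ℤ^{m×n} and b, b' ∈ ℤᵐ with b' = b − eⁱ for some index i, where eⁱ is the i-th standard unit vector. Suppose P = {x : Mx ≤ b} is a nonempty integral polyhedron and the constraint rowᵢ(M)x ≤ bᵢ is irredundant for P. If F' is a minimal nonempty face of P' = {x : Mx ≤ b'} that is not a face of P, then there exists a minimal nonempty face F of P whose set of tight constraint indices in Mx ≤ b equals the set of tight constraint indices of F' in Mx ≤ b', provided Mx ≤ b is non-degenerate. -/
import Mathlib


/-- `F` is a face of `S`: the set of maximizers of some linear functional over `S`. -/
def IsFaceOf {n : ℕ} (S F : Set (Fin n → ℝ)) : Prop :=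
  ∃ c : Fin n → ℝ, F = {x ∈ S | ∀ y ∈ S, ∑ j, c j * y j ≤ ∑ j, c j * x j}

/-- `F` is a minimal nonempty face of `S`. -/
def IsMinimalFaceOf {n : ℕ} (S F : Set (Fin n → ℝ)) : Prop :=
  IsFaceOf S F ∧ F.Nonempty ∧
    ∀ G, IsFaceOf S G → G.Nonempty → G ⊆ F → G = F

/-- Index set of constraints of `Mx ≤ b` tight on all of `F`. -/
def TightIdx {m n : ℕ} (M : Matrix (Fin m) (Fin n) ℤ) (b : Fin m → ℤ)
    (F : Set (Fin n → ℝ)) : Set (Fin m) :=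
  {i | ∀ x ∈ F, ∑ j, (M i j : ℝ) * x j = (b i : ℝ)}

/-- Every minimal nonempty face contains an integer point. -/
def IsIntegralPoly {n : ℕ} (S : Set (Fin n → ℝ)) : Prop :=
  ∀ F, IsMinimalFaceOf S F → ∃ x ∈ F, ∀ j, ∃ z : ℤ, x j = (z : ℝ)

/-- Non-degeneracy of `Mx ≤ b`: for every minimal nonempty proper face `F`, the
left-hand sides of the tight constraints are linearly independent, where among a
pair of tight constraints `αᵀx ≤ β`, `−αᵀx ≤ −β` only one is counted. -/
def NonDegenerate {m n : ℕ} (M : Matrix (Fin m) (Fin n) ℤ) (b : Fin m → ℤ)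
    (P : Set (Fin n → ℝ)) : Prop :=
  ∀ F, IsMinimalFaceOf P F → F ≠ P →
    ∃ J : Set (Fin m), J ⊆ TightIdx M b F ∧
      (∀ i ∈ TightIdx M b F, ∃ j ∈ J,
        ((∀ k, M i k = M j k) ∧ b i = b j) ∨
        ((∀ k, M i k = -(M j k)) ∧ b i = -(b j))) ∧
      LinearIndependent ℝ (fun j : J => fun k => (M j k : ℝ))

namespace MateAux

open Finset

variable {m n : ℕ}

/-- dot product -/
def dot (r x : Fin n → ℝ) : ℝ := ∑ j, r j * x j

lemma dot_comb (r x y : Fin n → ℝ) (a c : ℝ) :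
    dot r (a • x + c • y) = a * dot r x + c * dot r y := by
  simp only [dot, Pi.add_apply, Pi.smul_apply, smul_eq_mul, Finset.mul_sum]
  rw [← Finset.sum_add_distrib]
  exact Finset.sum_congr rfl fun j _ => by ring

lemma dot_add (r x y : Fin n → ℝ) : dot r (x + y) = dot r x + dot r y := by
  have := dot_comb r x y 1 1; simpa using this

lemma dot_smul (r x : Fin n → ℝ) (a : ℝ) : dot r (a • x) = a * dot r x := by
  have := dot_comb r x 0 a 0; simpa using this

lemma dot_sub (r x y : Fin n → ℝ) : dot r (x - y) = dot r x - dot r y := by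
  have := dot_comb r x y 1 (-1)
  simpa [sub_eq_add_neg, neg_smul] using this

lemma dot_neg_row (r r' : Fin n → ℝ) (h : ∀ j, r j = - r' j) (x : Fin n → ℝ) :
    dot r x = - dot r' x := by
  simp only [dot, ← Finset.sum_neg_distrib]
  exact Finset.sum_congr rfl fun j _ => by rw [h j]; ring

/-- the polyhedron of a system -/
def Sys (A : Fin m → Fin n → ℝ) (c : Fin m → ℝ) : Set (Fin n → ℝ) :=
  {x | ∀ k, dot (A k) x ≤ c k}

/-- tight index set -/
def TightSet (A : Fin m → Fin n → ℝ) (c : Fin m → ℝ) (F : Set (Fin n → ℝ)) : Set (Fin m) :=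
  {k | ∀ x ∈ F, dot (A k) x = c k}

lemma face_subset {S F : Set (Fin n → ℝ)} (hF : IsFaceOf S F) : F ⊆ S := by
  obtain ⟨c, rfl⟩ := hF; exact fun x hx => hx.1

/-- a helper: positive lower bound for finitely many positive values -/
lemma exists_pos_t (s : Finset (Fin m)) (f : Fin m → ℝ) (hf : ∀ k ∈ s, 0 < f k) :
    ∃ t : ℝ, 0 < t ∧ ∀ k ∈ s, t ≤ f k := by
  classical
  induction s using Finset.induction with
  | empty => exact ⟨1, one_pos, by simp⟩
  | @insert a s ha ih =>
    obtain ⟨t, ht, hts⟩ := ih (fun k hk => hf k (Finset.mem_insert_of_mem hk))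
    refine ⟨min t (f a), lt_min ht (hf a (Finset.mem_insert_self a s)), ?_⟩
    intro k hk
    rcases Finset.mem_insert.1 hk with rfl | hk
    · exact min_le_right _ _
    · exact le_trans (min_le_left _ _) (hts k hk)

lemma eq_zero_of_forall_add_mul_le (p q r : ℝ) (h : ∀ t : ℝ, p + t * q ≤ r) : q = 0 := by
  by_contra hq
  have := h ((r - p + 1) / q)
  rw [div_mul_cancel₀ _ hq] at this
  linarith


/-- Strict witness: a point of the face strict on all non-tight constraints. -/
lemma exists_relint (A : Fin m → Fin n → ℝ) (c : Fin m → ℝ) (F : Set (Fin n → ℝ))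
    (hF : IsFaceOf (Sys A c) F) (hne : F.Nonempty) :
    ∃ w ∈ F, ∀ k, k ∉ TightSet A c F → dot (A k) w < c k := by
  classical
  obtain ⟨cv, hFdef⟩ := hF
  have hFS : F ⊆ Sys A c := by rw [hFdef]; exact fun x hx => hx.1
  have hmax : ∀ x ∈ F, ∀ y ∈ Sys A c, dot cv y ≤ dot cv x := by
    intro x hx; rw [hFdef] at hx; exact hx.2
  -- key: all points of F have the same cv-value; midpoints stay in F
  have hmid : ∀ x ∈ F, ∀ y ∈ F, ((1/2 : ℝ) • x + (1/2 : ℝ) • y) ∈ F := by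
    intro x hx y hy
    have hxS := hFS hx; have hyS := hFS hy
    have hmem : ((1/2 : ℝ) • x + (1/2 : ℝ) • y) ∈ Sys A c := by
      intro k
      have := dot_comb (A k) x y (1/2) (1/2)
      rw [this]
      have h1 := hxS k; have h2 := hyS k
      linarith
    rw [hFdef]
    refine ⟨hmem, ?_⟩
    intro z hz
    have h1 : dot cv z ≤ dot cv x := hmax x hx z hz
    have h2 : dot cv y ≤ dot cv x := hmax x hx y (hFS hy)
    have h3 : dot cv x ≤ dot cv y := hmax y hy x (hFS hx)
    have hcomb : dot cv ((1/2 : ℝ) • x + (1/2 : ℝ) • y) = (1/2) * dot cv x + (1/2) * dot cv y :=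
      dot_comb cv x y (1/2) (1/2)
    show dot cv z ≤ dot cv ((1/2 : ℝ) • x + (1/2 : ℝ) • y)
    rw [hcomb]; linarith
  -- induction over a finset of indices
  have main : ∀ U : Finset (Fin m), ∃ w ∈ F, ∀ k ∈ U, k ∉ TightSet A c F → dot (A k) w < c k := by
    intro U
    induction U using Finset.induction with
    | empty => obtain ⟨w, hw⟩ := hne; exact ⟨w, hw, by simp⟩
    | @insert a U ha ih =>
      obtain ⟨w, hwF, hwU⟩ := ih
      by_cases hta : a ∈ TightSet A c F
      · exact ⟨w, hwF, fun k hk hkt => by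
          rcases Finset.mem_insert.1 hk with rfl | hk
          · exact absurd hta hkt
          · exact hwU k hk hkt⟩
      · have : ∃ y ∈ F, dot (A a) y ≠ c a := by
          by_contra hcon
          push_neg at hcon
          exact hta (fun x hx => hcon x hx)
        obtain ⟨y, hyF, hyne⟩ := this
        have hylt : dot (A a) y < c a := lt_of_le_of_ne (hFS hyF a) hyne
        refine ⟨(1/2 : ℝ) • w + (1/2 : ℝ) • y, hmid w hwF y hyF, ?_⟩
        intro k hk hkt
        rw [dot_comb]
        rcases Finset.mem_insert.1 hk with rfl | hk
        · have := hFS hwF k; linarith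
        · have h1 := hwU k hk hkt
          have h2 := hFS hyF k
          linarith
  obtain ⟨w, hwF, hw⟩ := main Finset.univ
  exact ⟨w, hwF, fun k hk => hw k (Finset.mem_univ k) hk⟩

/-- The set of points of `Sys` tight on `W` is a face, given one such point exists. -/
lemma isFaceOf_eqSet (A : Fin m → Fin n → ℝ) (c : Fin m → ℝ) (W : Set (Fin m))
    (x₀ : Fin n → ℝ) (hx₀S : x₀ ∈ Sys A c) (hx₀ : ∀ k ∈ W, dot (A k) x₀ = c k) :
    IsFaceOf (Sys A c) {x | x ∈ Sys A c ∧ ∀ k ∈ W, dot (A k) x = c k} := by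
  classical
  refine ⟨fun j => ∑ k, (if k ∈ W then (1:ℝ) else 0) * A k j, ?_⟩
  have hphi : ∀ x : Fin n → ℝ, (∑ j, (∑ k, (if k ∈ W then (1:ℝ) else 0) * A k j) * x j)
      = ∑ k, (if k ∈ W then dot (A k) x else 0) := by
    intro x
    simp only [Finset.sum_mul]
    rw [Finset.sum_comm]
    refine Finset.sum_congr rfl fun k _ => ?_
    by_cases hk : k ∈ W <;> simp [hk, dot]
  have hβle : ∀ y, y ∈ Sys A c →
      (∑ k, (if k ∈ W then dot (A k) y else 0)) ≤ ∑ k, (if k ∈ W then c k else 0) := by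
    intro y hy
    refine Finset.sum_le_sum fun k _ => ?_
    by_cases hk : k ∈ W <;> simp [hk]
    exact hy k
  have hβeq : ∀ y, (∀ k ∈ W, dot (A k) y = c k) →
      (∑ k, (if k ∈ W then dot (A k) y else 0)) = ∑ k, (if k ∈ W then c k else 0) := by
    intro y hy
    refine Finset.sum_congr rfl fun k _ => ?_
    by_cases hk : k ∈ W <;> simp [hk]
    exact hy k hk
  ext x
  simp only [Set.mem_setOf_eq]
  constructor
  · rintro ⟨hxS, hxeq⟩
    refine ⟨hxS, fun y hy => ?_⟩
    rw [hphi x, hphi y, hβeq x hxeq]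
    exact hβle y hy
  · rintro ⟨hxS, hxmax⟩
    refine ⟨hxS, ?_⟩
    by_contra hcon
    push_neg at hcon
    obtain ⟨k₁, hk₁W, hk₁⟩ := hcon
    have hk₁lt : dot (A k₁) x < c k₁ := lt_of_le_of_ne (hxS k₁) hk₁
    have hlt : (∑ k, (if k ∈ W then dot (A k) x else 0)) < ∑ k, (if k ∈ W then c k else 0) := by
      refine Finset.sum_lt_sum (fun k _ => ?_) ⟨k₁, Finset.mem_univ k₁, ?_⟩
      · by_cases hk : k ∈ W <;> simp [hk]
        exact hxS k
      · simp [hk₁W]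
        exact hk₁lt
    have h1 := hxmax x₀ hx₀S
    rw [hphi x, hphi x₀, hβeq x₀ hx₀] at h1
    linarith
/-- A (globally defined) affine equality set contained in `Sys` is a minimal face. -/
lemma isMinimalFaceOf_eqSet (A : Fin m → Fin n → ℝ) (c : Fin m → ℝ) (W : Set (Fin m))
    (hne : ({x | ∀ k ∈ W, dot (A k) x = c k} : Set (Fin n → ℝ)).Nonempty)
    (hsub : {x | ∀ k ∈ W, dot (A k) x = c k} ⊆ Sys A c) :
    IsMinimalFaceOf (Sys A c) {x | ∀ k ∈ W, dot (A k) x = c k} := by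
  obtain ⟨x₀, hx₀⟩ := hne
  have hface : IsFaceOf (Sys A c) {x | ∀ k ∈ W, dot (A k) x = c k} := by
    have h := isFaceOf_eqSet A c W x₀ (hsub hx₀) hx₀
    have hseteq : {x | x ∈ Sys A c ∧ ∀ k ∈ W, dot (A k) x = c k}
        = {x | ∀ k ∈ W, dot (A k) x = c k} := by
      ext x; exact ⟨fun h => h.2, fun h => ⟨hsub h, h⟩⟩
    rwa [hseteq] at h
  refine ⟨hface, ⟨x₀, hx₀⟩, ?_⟩
  intro G hG hGne hGsub
  obtain ⟨cg, hGdef⟩ := hG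
  obtain ⟨g₀, hg₀⟩ := hGne
  have hg₀A : ∀ k ∈ W, dot (A k) g₀ = c k := hGsub hg₀
  apply Set.Subset.antisymm hGsub
  intro y hy
  have hyW : ∀ k ∈ W, dot (A k) y = c k := hy
  have hw : ((2:ℝ) • g₀ + (-1:ℝ) • y) ∈ {x | ∀ k ∈ W, dot (A k) x = c k} := by
    intro k hk
    rw [dot_comb, hg₀A k hk, hyW k hk]; ring
  have hwS : ((2:ℝ) • g₀ + (-1:ℝ) • y) ∈ Sys A c := hsub hw
  have hg₀G := hg₀
  rw [hGdef] at hg₀G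
  have h1 : dot cg ((2:ℝ) • g₀ + (-1:ℝ) • y) ≤ dot cg g₀ := hg₀G.2 _ hwS
  rw [dot_comb] at h1
  have h2 : dot cg g₀ ≤ dot cg y := by linarith
  rw [hGdef]
  exact ⟨hsub hy, fun z hz => le_trans (hg₀G.2 z hz) h2⟩

/-- any point of `Sys` tight on the tight set of a nonempty face belongs to the face -/
lemma mem_face_of_tight (A : Fin m → Fin n → ℝ) (c : Fin m → ℝ) (F : Set (Fin n → ℝ))
    (hF : IsFaceOf (Sys A c) F) (hne : F.Nonempty)
    (y : Fin n → ℝ) (hyS : y ∈ Sys A c)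
    (hty : ∀ k ∈ TightSet A c F, dot (A k) y = c k) : y ∈ F := by
  classical
  obtain ⟨w, hwF, hwstrict⟩ := exists_relint A c F hF hne
  obtain ⟨cv, hFdef⟩ := hF
  have hFS : F ⊆ Sys A c := by rw [hFdef]; exact fun x hx => hx.1
  have hpos : ∀ k ∈ Finset.univ.filter (fun k => k ∉ TightSet A c F),
      0 < (c k - dot (A k) w) / (1 + |dot (A k) w - dot (A k) y|) := by
    intro k hk
    have hk' : k ∉ TightSet A c F := (Finset.mem_filter.1 hk).2
    have := hwstrict k hk'
    have habs : (0:ℝ) ≤ |dot (A k) w - dot (A k) y| := abs_nonneg _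
    apply div_pos <;> linarith
  obtain ⟨t, ht, hts⟩ := exists_pos_t _ _ hpos
  have hx_tS : ((1 + t) • w + (-t) • y) ∈ Sys A c := by
    intro k
    have hcomb := dot_comb (A k) w y (1 + t) (-t)
    by_cases hk : k ∈ TightSet A c F
    · have h1 : dot (A k) w = c k := hk w hwF
      rw [hcomb, h1, hty k hk]
      have : (1 + t) * c k + -t * c k = c k := by ring
      linarith [this.le]
    · have hb := hts k (Finset.mem_filter.2 ⟨Finset.mem_univ k, hk⟩)
      have hd : (0:ℝ) < 1 + |dot (A k) w - dot (A k) y| := by positivity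
      have h2 : t * (1 + |dot (A k) w - dot (A k) y|) ≤ c k - dot (A k) w := by
        rw [← le_div_iff₀ hd]; exact hb
      have habs : t * (dot (A k) w - dot (A k) y) ≤ t * |dot (A k) w - dot (A k) y| :=
        mul_le_mul_of_nonneg_left (le_abs_self _) ht.le
      have habs2 : (0:ℝ) ≤ |dot (A k) w - dot (A k) y| := abs_nonneg _
      have h3 : t * (dot (A k) w - dot (A k) y) = t * dot (A k) w - t * dot (A k) y := by ring
      have h4 : t * |dot (A k) w - dot (A k) y| ≤ t * (1 + |dot (A k) w - dot (A k) y|) := by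
        nlinarith
      rw [hcomb]
      nlinarith
  have hwF' := hwF
  rw [hFdef] at hwF'
  have h1 : dot cv ((1 + t) • w + (-t) • y) ≤ dot cv w := hwF'.2 _ hx_tS
  rw [dot_comb] at h1
  have h3 : t * dot cv w ≤ t * dot cv y := by nlinarith
  have h2 : dot cv w ≤ dot cv y := le_of_mul_le_mul_left h3 ht
  rw [hFdef]
  exact ⟨hyS, fun z hz => le_trans (hwF'.2 z hz) h2⟩
/-- A minimal nonempty face equals the (unrestricted) solution set of its tight equalities. -/
lemma minimalFace_eq (A : Fin m → Fin n → ℝ) (c : Fin m → ℝ) (F : Set (Fin n → ℝ))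
    (hF : IsMinimalFaceOf (Sys A c) F) :
    F = {x | ∀ k ∈ TightSet A c F, dot (A k) x = c k} := by
  classical
  obtain ⟨hface, hne, hmin⟩ := hF
  apply Set.Subset.antisymm
  · intro x hx k hk
    exact hk x hx
  · intro z hz
    have hzS : z ∈ Sys A c := by
      by_contra hzS
      obtain ⟨w, hwF, hwstrict⟩ := exists_relint A c F hface hne
      have hV : (Finset.univ.filter (fun k => ¬ dot (A k) z ≤ c k)).Nonempty := by
        rw [Finset.filter_nonempty_iff]
        by_contra hcon
        push_neg at hcon
        exact hzS (fun k => hcon k (Finset.mem_univ k))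
      set ρ : Fin m → ℝ := fun k => (c k - dot (A k) w) / (dot (A k) z - dot (A k) w) with hρ
      obtain ⟨k₀, hk₀V, hk₀min⟩ := Finset.exists_min_image _ ρ hV
      have hVfact : ∀ k ∈ Finset.univ.filter (fun k => ¬ dot (A k) z ≤ c k),
          k ∉ TightSet A c F ∧ dot (A k) w < c k ∧ c k < dot (A k) z := by
        intro k hk
        have hk2 : ¬ dot (A k) z ≤ c k := (Finset.mem_filter.1 hk).2
        have hkT : k ∉ TightSet A c F := by
          intro hkT
          exact hk2 (le_of_eq (hz k hkT))
        exact ⟨hkT, hwstrict k hkT, lt_of_not_ge hk2⟩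
      obtain ⟨hk₀T, hk₀w, hk₀z⟩ := hVfact k₀ hk₀V
      have hden₀ : (0:ℝ) < dot (A k₀) z - dot (A k₀) w := by linarith
      have hρ₀pos : 0 < ρ k₀ := div_pos (by linarith) hden₀
      have hρ₀lt1 : ρ k₀ < 1 := by
        rw [hρ, div_lt_one hden₀]; linarith
      set t := ρ k₀ with htdef
      -- the point y* = (1-t) w + t z
      have hyS : ((1 - t) • w + t • z) ∈ Sys A c := by
        intro k
        have hcomb := dot_comb (A k) w z (1 - t) t
        by_cases hkV : k ∈ Finset.univ.filter (fun k => ¬ dot (A k) z ≤ c k)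
        · obtain ⟨hkT, hkw, hkz⟩ := hVfact k hkV
          have hden : (0:ℝ) < dot (A k) z - dot (A k) w := by linarith
          have hb := hk₀min k hkV
          have h2 : t * (dot (A k) z - dot (A k) w) ≤ c k - dot (A k) w := by
            calc t * (dot (A k) z - dot (A k) w)
                ≤ ρ k * (dot (A k) z - dot (A k) w) :=
                  mul_le_mul_of_nonneg_right hb hden.le
              _ = c k - dot (A k) w := by
                  rw [hρ]; field_simp
          rw [hcomb]; nlinarith
        · have hkz : dot (A k) z ≤ c k := by
            by_contra hcon
            exact hkV (Finset.mem_filter.2 ⟨Finset.mem_univ k, hcon⟩)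
          have hkw : dot (A k) w ≤ c k := face_subset hface hwF k
          rw [hcomb]; nlinarith
      have hytight : ∀ k ∈ TightSet A c F, dot (A k) ((1 - t) • w + t • z) = c k := by
        intro k hk
        rw [dot_comb, hk w hwF, hz k hk]; ring
      have hyk₀ : dot (A k₀) ((1 - t) • w + t • z) = c k₀ := by
        rw [dot_comb, htdef, hρ]
        field_simp
        ring
      -- the face tight on TightSet ∪ {k₀}
      have htall : ∀ k ∈ TightSet A c F ∪ {k₀}, dot (A k) ((1 - t) • w + t • z) = c k := by
        intro k hk
        rcases hk with hk | hk
        · exact hytight k hk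
        · rw [Set.mem_singleton_iff] at hk; subst hk; exact hyk₀
      have hface₀ := isFaceOf_eqSet A c (TightSet A c F ∪ {k₀}) ((1 - t) • w + t • z) hyS htall
      have hsub₀ : {x | x ∈ Sys A c ∧ ∀ k ∈ TightSet A c F ∪ {k₀}, dot (A k) x = c k} ⊆ F := by
        intro x hx
        exact mem_face_of_tight A c F hface hne x hx.1
          (fun k hk => hx.2 k (Or.inl hk))
      have hne₀ : ({x | x ∈ Sys A c ∧ ∀ k ∈ TightSet A c F ∪ {k₀}, dot (A k) x = c k} :
          Set (Fin n → ℝ)).Nonempty := by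
        exact ⟨(1 - t) • w + t • z, hyS, htall⟩
      have heq := hmin _ hface₀ hne₀ hsub₀
      have hwmem : w ∈ {x | x ∈ Sys A c ∧ ∀ k ∈ TightSet A c F ∪ {k₀}, dot (A k) x = c k} := by
        rw [heq]; exact hwF
      have : dot (A k₀) w = c k₀ := hwmem.2 k₀ (Or.inr rfl)
      linarith
    exact mem_face_of_tight A c F hface hne z hzS (fun k hk => hz k hk)
/-- finite-dimensional duality: a vector orthogonal (w.r.t. `dot`) to the common kernel
of a family of row vectors lies in their span. -/
lemma mem_span_of_orth {ι : Type*} (f : ι → (Fin n → ℝ)) (v : Fin n → ℝ)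
    (h : ∀ e : Fin n → ℝ, (∀ i, dot (f i) e = 0) → dot v e = 0) :
    v ∈ Submodule.span ℝ (Set.range f) := by
  classical
  by_contra hv
  obtain ⟨g, hgv, hgmap⟩ := Submodule.exists_dual_map_eq_bot_of_notMem hv inferInstance
  set e : Fin n → ℝ := fun j => g (fun j' => if j = j' then 1 else 0) with he
  have hg_eq : ∀ w : Fin n → ℝ, g w = dot w e := by
    intro w
    conv_lhs => rw [pi_eq_sum_univ w]
    rw [map_sum]
    refine Finset.sum_congr rfl fun j _ => ?_
    rw [map_smul, smul_eq_mul, he]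
  have hker : ∀ i, dot (f i) e = 0 := by
    intro i
    rw [← hg_eq]
    have hmem : f i ∈ Submodule.span ℝ (Set.range f) := Submodule.subset_span ⟨i, rfl⟩
    have : g (f i) ∈ (Submodule.span ℝ (Set.range f)).map g := ⟨f i, hmem, rfl⟩
    rw [hgmap] at this
    exact this
  have hve := h e hker
  rw [← hg_eq v] at hve
  exact hgv hve

end MateAux

open MateAux in
/-- Mates of minimal faces after decreasing one right-hand side by one: if `P` is a
nonempty integral polyhedron, constraint `i` is irredundant, and `Mx ≤ b` is
non-degenerate, then every minimal nonempty face of `P' = {x : Mx ≤ b − eⁱ}` that is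
not a face of `P` has a mate among the minimal nonempty faces of `P`. -/
theorem minimal_face_mate {m n : ℕ} (M : Matrix (Fin m) (Fin n) ℤ)
    (b b' : Fin m → ℤ) (i : Fin m)
    (hb' : b' = fun k => b k - (if k = i then 1 else 0))
    (P P' : Set (Fin n → ℝ))
    (hP : P = {x | ∀ k, ∑ j, (M k j : ℝ) * x j ≤ (b k : ℝ)})
    (hP' : P' = {x | ∀ k, ∑ j, (M k j : ℝ) * x j ≤ (b' k : ℝ)})
    (hPne : P.Nonempty)
    (hPint : IsIntegralPoly P)
    (hirr : ∃ x : Fin n → ℝ, (∀ k, k ≠ i → ∑ j, (M k j : ℝ) * x j ≤ (b k : ℝ)) ∧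
      (b i : ℝ) < ∑ j, (M i j : ℝ) * x j)
    (hnondeg : NonDegenerate M b P)
    (F' : Set (Fin n → ℝ)) (hF' : IsMinimalFaceOf P' F')
    (hnotface : ¬ IsFaceOf P F') :
    ∃ F, IsMinimalFaceOf P F ∧ TightIdx M b F = TightIdx M b' F' := by
  classical
  subst hP hP'
  set Ar : Fin m → Fin n → ℝ := fun k j => (M k j : ℝ) with hArdef
  set br : Fin m → ℝ := fun k => ((b k : ℤ) : ℝ) with hbrdef
  set br' : Fin m → ℝ := fun k => ((b' k : ℤ) : ℝ) with hbr'def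
  have hbr'_eq : ∀ k, br' k = br k - (if k = i then 1 else 0) := by
    intro k
    rw [hbr'def, hbrdef, hb']
    by_cases h : k = i <;> push_cast [h] <;> simp
  have hbr'_le : ∀ k, br' k ≤ br k := by
    intro k; rw [hbr'_eq k]; by_cases h : k = i <;> simp [h]
  have hbr'_ne : ∀ k, k ≠ i → br' k = br k := by
    intro k hk; rw [hbr'_eq k]; simp [hk]
  have hbr'_i : br' i = br i - 1 := by rw [hbr'_eq i]; simp
  -- the minimal face F' of the b' system
  have hF'sys : IsMinimalFaceOf (Sys Ar br') F' := hF'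
  have hF'sub : F' ⊆ Sys Ar br' := face_subset hF'sys.1
  set I : Set (Fin m) := TightSet Ar br' F' with hIdef
  have h3' : F' = {x | ∀ k ∈ I, dot (Ar k) x = br' k} := minimalFace_eq Ar br' F' hF'sys
  obtain ⟨x', hx'F', hx'strict⟩ := exists_relint Ar br' F' hF'sys.1 hF'sys.2.1
  set cst : Fin m → ℝ := fun k => dot (Ar k) x' with hcstdef
  -- directions in the kernel of the tight rows are in the kernel of all rows
  have hkerI : ∀ e : Fin n → ℝ, (∀ k ∈ I, dot (Ar k) e = 0) → ∀ k, dot (Ar k) e = 0 := by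
    intro e he k
    apply eq_zero_of_forall_add_mul_le (cst k) _ (br' k)
    intro t
    have hmem : (x' + t • e) ∈ F' := by
      rw [h3']
      intro k' hk'
      rw [dot_add, dot_smul, he k' hk', mul_zero, add_zero]
      exact hk' x' hx'F'
    have hS := hF'sub hmem k
    rw [dot_add, dot_smul] at hS
    exact hS
  -- every constraint is constant on F'
  have hconst : ∀ k, ∀ x ∈ F', dot (Ar k) x = cst k := by
    intro k x hx
    have hdiff : ∀ k' ∈ I, dot (Ar k') (x - x') = 0 := by
      intro k' hk'
      rw [dot_sub, hk' x hx, hk' x' hx'F', sub_self]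
    have h0 := hkerI _ hdiff k
    rw [dot_sub] at h0
    linarith
  have hcstle : ∀ k, cst k ≤ br' k := fun k => hF'sub hx'F' k
  have hcstI : ∀ k ∈ I, cst k = br' k := fun k hk => hk x' hx'F'
  have hcststrict : ∀ k, k ∉ I → cst k < br' k := hx'strict
  -- irredundancy killer for duplicates of row i
  have kill_dup_i : ∀ k, k ≠ i → (∀ j', M k j' = M i j') → b k = b i → False := by
    intro k hk hrow hbv
    obtain ⟨x₀, hx₀, hx₀i⟩ := hirr
    have h1 : dot (Ar k) x₀ ≤ (b k : ℝ) := hx₀ k hk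
    have h2 : dot (Ar k) x₀ = dot (Ar i) x₀ := by
      show ∑ j, Ar k j * x₀ j = ∑ j, Ar i j * x₀ j
      refine Finset.sum_congr rfl fun j' _ => ?_
      rw [hArdef]
      norm_num [hrow j']
    have h3 : ((b k : ℝ)) = ((b i : ℝ)) := by exact_mod_cast hbv
    have h4 : (b i : ℝ) < dot (Ar i) x₀ := hx₀i
    rw [h2, h3] at h1
    exact absurd h1 (not_le.mpr h4)
  -- Step 1 : i is tight on F' in the b' system
  have hiI : i ∈ I := by
    by_contra hiI
    have hF'br : F' = {x | ∀ k ∈ I, dot (Ar k) x = br k} := by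
      rw [h3']
      ext x
      simp only [Set.mem_setOf_eq]
      refine forall_congr' fun k => imp_congr_right fun hk => ?_
      rw [hbr'_ne k (fun h => hiI (h ▸ hk))]
    have hsub : {x | ∀ k ∈ I, dot (Ar k) x = br k} ⊆ Sys Ar br := by
      intro x hx k
      have hxF' : x ∈ F' := by rw [hF'br]; exact hx
      rw [hconst k x hxF']
      exact le_trans (hcstle k) (hbr'_le k)
    have hmin := isMinimalFaceOf_eqSet Ar br I (hF'br ▸ hF'sys.2.1) hsub
    rw [← hF'br] at hmin
    exact hnotface hmin.1
  have hcsti : cst i = br i - 1 := by rw [hcstI i hiI, hbr'_i]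
  set T : Set (Fin m) := I \ {i} with hTdef
  have hcstT : ∀ k ∈ T, cst k = br k := by
    intro k hk
    rw [hcstI k hk.1, hbr'_ne k hk.2]
  -- Step 2 : a direction raising constraint i while fixing the others
  have hd : ∃ d : Fin n → ℝ, (∀ k ∈ T, dot (Ar k) d = 0) ∧ dot (Ar i) d = 1 := by
    by_contra hcon
    push_neg at hcon
    have hT0 : ∀ e : Fin n → ℝ, (∀ k ∈ T, dot (Ar k) e = 0) → dot (Ar i) e = 0 := by
      intro e he
      by_contra ha
      refine hcon ((dot (Ar i) e)⁻¹ • e) (fun k hk => ?_) ?_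
      · rw [dot_smul, he k hk, mul_zero]
      · rw [dot_smul]
        field_simp
    have hF'T : F' = {x | ∀ k ∈ T, dot (Ar k) x = br k} := by
      apply Set.Subset.antisymm
      · intro x hx k hk
        rw [hconst k x hx]
        exact hcstT k hk
      · intro x hx
        rw [h3']
        intro k hk
        have hxd : ∀ k' ∈ T, dot (Ar k') (x - x') = 0 := by
          intro k' hk'
          rw [dot_sub, hx k' hk']
          show br k' - cst k' = 0
          rw [hcstT k' hk']; ring
        have hi0 : dot (Ar i) (x - x') = 0 := hT0 _ hxd
        have hall : dot (Ar k) (x - x') = 0 := by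
          by_cases h : k = i
          · subst h; exact hi0
          · exact hxd k ⟨hk, h⟩
        rw [dot_sub] at hall
        have : dot (Ar k) x = cst k := by
          have : dot (Ar k) x' = cst k := rfl
          linarith
        rw [this]
        exact hcstI k hk
    have hsub : {x | ∀ k ∈ T, dot (Ar k) x = br k} ⊆ Sys Ar br := by
      intro x hx k
      have hxF' : x ∈ F' := by rw [hF'T]; exact hx
      rw [hconst k x hxF']
      exact le_trans (hcstle k) (hbr'_le k)
    have hmin := isMinimalFaceOf_eqSet Ar br T (hF'T ▸ hF'sys.2.1) hsub
    rw [← hF'T] at hmin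
    exact hnotface hmin.1
  obtain ⟨d, hdT, hdi⟩ := hd
  set D : Fin m → ℝ := fun k => dot (Ar k) d with hDdef
  -- the candidate mate
  set Aset : Set (Fin n → ℝ) := {x | ∀ k ∈ I, dot (Ar k) x = br k} with hAsetdef
  have hx'd : (x' + d) ∈ Aset := by
    intro k hk
    rw [dot_add]
    by_cases hki : k = i
    · subst hki
      rw [hdi]
      show cst k + 1 = br k
      rw [hcsti]; ring
    · rw [hdT k ⟨hk, hki⟩]
      show cst k + 0 = br k
      rw [hcstT k ⟨hk, hki⟩]; ring
  -- all constraints are constant on Aset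
  have hAval : ∀ x ∈ Aset, ∀ k, dot (Ar k) x = cst k + D k := by
    intro x hx k
    have hdiff : ∀ k' ∈ I, dot (Ar k') (x - (x' + d)) = 0 := by
      intro k' hk'
      rw [dot_sub, hx k' hk', hx'd k' hk', sub_self]
    have h0 := hkerI _ hdiff k
    rw [dot_sub, dot_add] at h0
    show dot (Ar k) x = dot (Ar k) x' + dot (Ar k) d
    linarith
  -- key claim : Aset ⊆ P
  have hAsub : Aset ⊆ Sys Ar br := by
    suffices hvle : ∀ k, cst k + D k ≤ br k by
      intro x hx k
      rw [hAval x hx k]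
      exact hvle k
    by_contra hcon2
    push_neg at hcon2
    obtain ⟨k₁, hk₁⟩ := hcon2
    set B : Finset (Fin m) := Finset.univ.filter (fun k => br k < cst k + D k) with hBdef
    have hBne : B.Nonempty := ⟨k₁, Finset.mem_filter.2 ⟨Finset.mem_univ _, hk₁⟩⟩
    have hBfact : ∀ k ∈ B, k ∉ I ∧ cst k < br k ∧ 0 < D k := by
      intro k hk
      have hklt : br k < cst k + D k := (Finset.mem_filter.1 hk).2
      have hkI : k ∉ I := by
        intro hkI
        by_cases hki : k = i
        · subst hki
          have h1 : D k = 1 := hdi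
          rw [h1, hcsti] at hklt
          linarith
        · have h0 : D k = 0 := hdT k ⟨hkI, hki⟩
          have h1 := hcstI k hkI
          rw [hbr'_ne k hki] at h1
          rw [h0, h1] at hklt
          linarith
      have hki : k ≠ i := fun h => hkI (h ▸ hiI)
      have hlt : cst k < br k := lt_of_lt_of_le (hcststrict k hkI) (hbr'_le k)
      exact ⟨hkI, hlt, by linarith⟩
    obtain ⟨k₀, hk₀B, hk₀min⟩ :=
      Finset.exists_min_image B (fun k => (br k - cst k) / D k) hBne
    obtain ⟨hk₀I, hk₀lt, hk₀D⟩ := hBfact k₀ hk₀B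
    have hk₀ne : D k₀ ≠ 0 := ne_of_gt hk₀D
    set τ : ℝ := (br k₀ - cst k₀) / D k₀ with hτdef
    have hτpos : 0 < τ := div_pos (by linarith) hk₀D
    have hτlt1 : τ < 1 := by
      rw [hτdef, div_lt_one hk₀D]
      have := (Finset.mem_filter.1 hk₀B).2
      linarith
    set W₂ : Set (Fin m) := T ∪ {k₀} with hW₂def
    set x₂ : Fin n → ℝ := x' + τ • d with hx₂def
    have hx₂val : ∀ k, dot (Ar k) x₂ = cst k + τ * D k := by
      intro k
      rw [hx₂def, dot_add, dot_smul]
    have hx₂W : ∀ k ∈ W₂, dot (Ar k) x₂ = br k := by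
      intro k hk
      rcases hk with hk | hk
      · have h0 : D k = 0 := hdT k hk
        rw [hx₂val k, h0, mul_zero, add_zero]
        exact hcstT k hk
      · rw [Set.mem_singleton_iff] at hk
        rw [hk, hx₂val k₀, hτdef, div_mul_cancel₀ _ hk₀ne]
        ring
    have hA₂val : ∀ x, (∀ k ∈ W₂, dot (Ar k) x = br k) →
        ∀ k, dot (Ar k) x = cst k + τ * D k := by
      intro x hx k
      have heW : ∀ k' ∈ W₂, dot (Ar k') (x - x₂) = 0 := by
        intro k' hk'
        rw [dot_sub, hx k' hk', hx₂W k' hk', sub_self]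
      set s : ℝ := dot (Ar i) (x - x₂) with hsdef
      have he' : ∀ k' ∈ I, dot (Ar k') ((x - x₂) - s • d) = 0 := by
        intro k' hk'
        by_cases hki : k' = i
        · subst hki
          rw [dot_sub, dot_smul, hdi, mul_one, ← hsdef, sub_self]
        · have h0 : dot (Ar k') d = 0 := hdT k' ⟨hk', hki⟩
          rw [dot_sub, dot_smul, h0, mul_zero, sub_zero]
          exact heW k' (Or.inl ⟨hk', hki⟩)
      have hall := hkerI _ he'
      have hk₀0 : dot (Ar k₀) (x - x₂) = 0 := heW k₀ (Or.inr rfl)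
      have hs0 : s = 0 := by
        have h1 := hall k₀
        rw [dot_sub, dot_smul, hk₀0] at h1
        have h2 : s * D k₀ = 0 := by
          have : dot (Ar k₀) d = D k₀ := rfl
          rw [this] at h1
          linarith
        exact (mul_eq_zero.1 h2).resolve_right hk₀ne
      have hx0 : ∀ k', dot (Ar k') (x - x₂) = 0 := by
        intro k'
        have h1 := hall k'
        rw [dot_sub, dot_smul, hs0, zero_mul, sub_zero] at h1
        rw [dot_sub]
        rw [dot_sub] at h1
        exact h1
      have h2 := hx0 k
      rw [dot_sub] at h2
      have h3 := hx₂val k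
      linarith
    have hA₂sub : {x | ∀ k ∈ W₂, dot (Ar k) x = br k} ⊆ Sys Ar br := by
      intro x hx k
      have hval := hA₂val x hx k
      rw [hval]
      by_cases hkI : k ∈ I
      · by_cases hki : k = i
        · subst hki
          have h1 : D k = 1 := hdi
          rw [h1, mul_one, hcsti]
          linarith
        · have h0 : D k = 0 := hdT k ⟨hkI, hki⟩
          rw [h0, mul_zero, add_zero, hcstT k ⟨hkI, hki⟩]
      · have hki : k ≠ i := fun h => hkI (h ▸ hiI)
        have hlt : cst k < br k := lt_of_lt_of_le (hcststrict k hkI) (hbr'_le k)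
        by_cases hkB : k ∈ B
        · have hD : 0 < D k := (hBfact k hkB).2.2
          have hb := hk₀min k hkB
          have h2 : τ * D k ≤ br k - cst k := by
            calc τ * D k ≤ ((br k - cst k) / D k) * D k :=
                  mul_le_mul_of_nonneg_right hb hD.le
              _ = br k - cst k := div_mul_cancel₀ _ (ne_of_gt hD)
          linarith
        · have hble : cst k + D k ≤ br k := by
            by_contra hc
            exact hkB (Finset.mem_filter.2 ⟨Finset.mem_univ _, lt_of_not_ge hc⟩)
          by_cases hD : 0 < D k
          · nlinarith
          · push_neg at hD
            nlinarith
    have hA₂min : IsMinimalFaceOf (Sys Ar br) {x | ∀ k ∈ W₂, dot (Ar k) x = br k} :=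
      isMinimalFaceOf_eqSet Ar br W₂ ⟨x₂, hx₂W⟩ hA₂sub
    obtain ⟨z, hzA₂, hzint⟩ := hPint _ hA₂min
    choose ζ hζ using hzint
    have hvz : dot (Ar i) z = br i - 1 + τ := by
      have h1 := hA₂val z hzA₂ i
      have h2 : D i = 1 := hdi
      rw [h2, mul_one, hcsti] at h1
      exact h1
    have hzq : dot (Ar i) z = ((∑ j, M i j * ζ j : ℤ) : ℝ) := by
      push_cast
      show ∑ j, Ar i j * z j = _
      refine Finset.sum_congr rfl fun j _ => ?_
      rw [hζ j]
    have h1 : ((b i - 1 : ℤ) : ℝ) < ((∑ j, M i j * ζ j : ℤ) : ℝ) := by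
      rw [← hzq, hvz, hbrdef]
      push_cast
      linarith
    have h2 : ((∑ j, M i j * ζ j : ℤ) : ℝ) < ((b i : ℤ) : ℝ) := by
      rw [← hzq, hvz, hbrdef]
      push_cast
      linarith
    have h1' : b i - 1 < ∑ j, M i j * ζ j := by exact_mod_cast h1
    have h2' : (∑ j, M i j * ζ j) < b i := by exact_mod_cast h2
    omega
  have hAne : Aset.Nonempty := ⟨x' + d, hx'd⟩
  have hAmin : IsMinimalFaceOf (Sys Ar br) Aset := isMinimalFaceOf_eqSet Ar br I hAne hAsub
  -- tight set of Aset is exactly I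
  have hIS : I ⊆ TightSet Ar br Aset := by
    intro k hk x hx
    exact hx k hk
  have hSI : TightSet Ar br Aset ⊆ I := by
    intro k hkS
    by_contra hkI
    have hki : k ≠ i := fun h => hkI (h ▸ hiI)
    have hck : cst k < br k := lt_of_lt_of_le (hcststrict k hkI) (hbr'_le k)
    have hAneP : Aset ≠ Sys Ar br := by
      intro heq
      have hx'P : x' ∈ Sys Ar br := fun k' => le_trans (hF'sub hx'F' k') (hbr'_le k')
      have hx'A : x' ∈ Aset := by rw [heq]; exact hx'P
      have h2 : cst i = br i := hx'A i hiI
      rw [hcsti] at h2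
      linarith
    obtain ⟨J, hJsub, hJcov, hJli⟩ := hnondeg Aset hAmin hAneP
    have hf1 : ∀ l ∈ I, ∃ jj, jj ∈ J ∧ jj ∈ I ∧
        ((∀ x, dot (Ar l) x = dot (Ar jj) x) ∨ (∀ x, dot (Ar l) x = - dot (Ar jj) x)) := by
      intro l hl
      obtain ⟨jj, hjJ, hcase⟩ := hJcov l (hIS hl)
      rcases hcase with ⟨hrow, hbval⟩ | ⟨hrow, hbval⟩
      · have hdoteq : ∀ x, dot (Ar l) x = dot (Ar jj) x := by
          intro x
          show ∑ j', Ar l j' * x j' = ∑ j', Ar jj j' * x j'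
          refine Finset.sum_congr rfl fun j' _ => ?_
          rw [hArdef]
          norm_num [hrow j']
        have hbeq : br l = br jj := by
          show ((b l : ℤ) : ℝ) = ((b jj : ℤ) : ℝ)
          exact_mod_cast hbval
        have hcsteq : cst l = cst jj := hdoteq x'
        have h1 : cst l = br' l := hcstI l hl
        by_cases hji : jj = i
        · by_cases hli : l = i
          · exact ⟨jj, hjJ, hji ▸ hiI, Or.inl hdoteq⟩
          · exfalso
            rw [hbr'_ne l hli] at h1
            have h2 : cst i = br i - 1 := hcsti
            rw [hji] at hcsteq hbeq
            linarith
        · by_cases hli : l = i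
          · exfalso
            subst hli
            exact kill_dup_i jj hji (fun j' => (hrow j').symm) hbval.symm
          · have hjI : jj ∈ I := by
              intro x hx
              rw [hconst jj x hx]
              have h2 : cst jj = br jj := by
                rw [← hcsteq, h1, hbr'_ne l hli, hbeq]
              rw [h2]
              exact (hbr'_ne jj hji).symm
            exact ⟨jj, hjJ, hjI, Or.inl hdoteq⟩
      · have hdotneg : ∀ x, dot (Ar l) x = - dot (Ar jj) x := by
          intro x
          refine dot_neg_row _ _ (fun j' => ?_) x
          rw [hArdef]
          norm_num [hrow j']
        have hbneg : br l = - br jj := by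
          show ((b l : ℤ) : ℝ) = -((b jj : ℤ) : ℝ)
          exact_mod_cast hbval
        have hcstneg : cst l = - cst jj := hdotneg x'
        have h1 : cst l = br' l := hcstI l hl
        have hjle : cst jj ≤ br' jj := hcstle jj
        have hb'j : br' jj ≤ br jj := hbr'_le jj
        by_cases hli : l = i
        · exfalso
          rw [hli] at h1 hcstneg hbneg
          rw [hcsti] at hcstneg
          linarith [hbr'_i]
        · by_cases hji : jj = i
          · exfalso
            rw [hbr'_ne l hli] at h1
            rw [hji] at hcstneg hbneg hjle hb'j
            rw [hcsti] at hcstneg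
            linarith
          · have hjI : jj ∈ I := by
              intro x hx
              rw [hconst jj x hx]
              have h2 : cst jj = br jj := by
                rw [hbr'_ne l hli] at h1
                linarith
              rw [h2]
              exact (hbr'_ne jj hji).symm
            exact ⟨jj, hjJ, hjI, Or.inr hdotneg⟩
    obtain ⟨jj, hjJ, hcase⟩ := hJcov k hkS
    have hjNI : jj ∉ I := by
      rcases hcase with ⟨hrow, hbval⟩ | ⟨hrow, hbval⟩
      · have hdoteq : ∀ x, dot (Ar k) x = dot (Ar jj) x := by
          intro x
          show ∑ j', Ar k j' * x j' = ∑ j', Ar jj j' * x j'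
          refine Finset.sum_congr rfl fun j' _ => ?_
          rw [hArdef]
          norm_num [hrow j']
        have hbeq : br k = br jj := by
          show ((b k : ℤ) : ℝ) = ((b jj : ℤ) : ℝ)
          exact_mod_cast hbval
        have hcsteq : cst k = cst jj := hdoteq x'
        by_cases hji : jj = i
        · exact absurd (kill_dup_i k hki (fun j' => hji ▸ hrow j') (by rw [← hji]; exact hbval))
            (fun h => h)
        · intro hjI
          have h1 : cst jj = br' jj := hcstI jj hjI
          rw [hbr'_ne jj hji] at h1
          rw [hcsteq, h1, ← hbeq] at hck
          exact lt_irrefl _ hck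
      · exfalso
        have hdotneg : ∀ x, dot (Ar k) x = - dot (Ar jj) x := by
          intro x
          refine dot_neg_row _ _ (fun j' => ?_) x
          rw [hArdef]
          norm_num [hrow j']
        have hbneg : br k = - br jj := by
          show ((b k : ℤ) : ℝ) = -((b jj : ℤ) : ℝ)
          exact_mod_cast hbval
        have hcstneg : cst k = - cst jj := hdotneg x'
        have hjle : cst jj ≤ br' jj := hcstle jj
        have hb'j : br' jj ≤ br jj := hbr'_le jj
        linarith
    set JI : Set ↥J := {t : ↥J | (t : Fin m) ∈ I} with hJIdef
    have hjmem : (⟨jj, hjJ⟩ : ↥J) ∉ JI := hjNI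
    have hnotspan := hJli.notMem_span_image hjmem
    apply hnotspan
    have hspan : Ar jj ∈ Submodule.span ℝ
        (Set.range (fun u : ↥JI => Ar ((u : ↥J) : Fin m))) := by
      apply mem_span_of_orth
      intro e he
      have heI : ∀ l ∈ I, dot (Ar l) e = 0 := by
        intro l hl
        obtain ⟨j₁, hj₁J, hj₁I, hrel⟩ := hf1 l hl
        have h0 : dot (Ar j₁) e = 0 := he ⟨⟨j₁, hj₁J⟩, hj₁I⟩
        rcases hrel with h | h
        · rw [h e, h0]
        · rw [h e, h0, neg_zero]
      exact hkerI e heI jj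
    have hrange : Set.range (fun u : ↥JI => Ar ((u : ↥J) : Fin m))
        = (fun t : ↥J => Ar (t : Fin m)) '' JI :=
      (Set.image_eq_range (fun t : ↥J => Ar (t : Fin m)) JI).symm
    rw [hrange] at hspan
    exact hspan
  exact ⟨Aset, hAmin, Set.Subset.antisymm hSI hIS⟩
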